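/- For a discrete random variable X and statistic 𝒮 with S = 𝒮(X): if f(x|θ) factorizes as g(x)·f̃(𝒮(x)|θ) with g independent of θ, then for any prior on θ, I(θ;X|S) = 0. -/

import Mathlib

open Real BigOperators

namespace Disc

variable {Ω : Type*} [Fintype Ω]

/-- A probability mass function on a finite sample space. -/
def IsPMF (p : Ω → ℝ) : Prop := (∀ ω, 0 ≤ p ω) ∧ ∑ ω, p ω = 1

/-- Probability that the random variable `X` takes value `x`. -/
noncomputable def pr {α : Type*} [Fintype α] [DecidableEq α]
    (p : Ω → ℝ) (X : Ω → α) (x : α) : ℝ :=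
  ∑ ω, if X ω = x then p ω else 0

/-- Shannon entropy of a discrete random variable. -/
noncomputable def H {α : Type*} [Fintype α] [DecidableEq α]
    (p : Ω → ℝ) (X : Ω → α) : ℝ :=
  - ∑ x, pr p X x * Real.log (pr p X x)

/-- Conditional Shannon entropy `H(X|Y)` (with the `0 log 0 = 0` and `x/0 = 0` conventions). -/
noncomputable def condH {α β : Type*} [Fintype α] [Fintype β] [DecidableEq α] [DecidableEq β]
    (p : Ω → ℝ) (X : Ω → α) (Y : Ω → β) : ℝ :=
  - ∑ x, ∑ y, pr p (fun ω => (X ω, Y ω)) (x, y) *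
      Real.log (pr p (fun ω => (X ω, Y ω)) (x, y) / pr p Y y)

/-- Mutual information `I(X;Y) = H(X) - H(X|Y)`. -/
noncomputable def MI {α β : Type*} [Fintype α] [Fintype β] [DecidableEq α] [DecidableEq β]
    (p : Ω → ℝ) (X : Ω → α) (Y : Ω → β) : ℝ :=
  H p X - condH p X Y

/-- Conditional mutual information `I(X;Y|Z) = H(X|Z) - H(X|(Y,Z))`. -/
noncomputable def condMI {α β γ : Type*} [Fintype α] [Fintype β] [Fintype γ]
    [DecidableEq α] [DecidableEq β] [DecidableEq γ]
    (p : Ω → ℝ) (X : Ω → α) (Y : Ω → β) (Z : Ω → γ) : ℝ :=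
  condH p X Z - condH p X (fun ω => (Y ω, Z ω))

end Disc

open Disc


/-- If the likelihood factorizes as `f(x|θ) = g(x) · f̃(𝒮(x)|θ)`, then for any prior,
`I(θ;X|S) = 0` under the joint distribution `p(θ,x) = pri(θ) f(x|θ)`. -/
theorem factorization_implies_condMI_zero
    {Θ α β : Type*} [Fintype Θ] [Fintype α] [Fintype β]
    [DecidableEq Θ] [DecidableEq α] [DecidableEq β]
    (pri : Θ → ℝ) (hpri0 : ∀ t, 0 ≤ pri t) (hpri1 : ∑ t, pri t = 1)
    (f : α → Θ → ℝ) (hf0 : ∀ t x, 0 ≤ f x t) (hf1 : ∀ t, ∑ x, f x t = 1)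
    (𝒮 : α → β) (g : α → ℝ) (ft : β → Θ → ℝ)
    (hfact : ∀ x t, f x t = g x * ft (𝒮 x) t) :
    condMI (fun tx : Θ × α => pri tx.1 * f tx.2 tx.1)
      (fun tx => tx.1) (fun tx => tx.2) (fun tx => 𝒮 tx.2) = 0 := by
  classical
  set p : Θ × α → ℝ := fun tx => pri tx.1 * f tx.2 tx.1 with hp
  set A : β → ℝ := fun s => ∑ t, pri t * ft s t with hA
  set G : β → ℝ := fun s => ∑ x, if 𝒮 x = s then g x else 0 with hG
  -- marginal computations
  have h1 : ∀ t s, pr p (fun tx => (tx.1, 𝒮 tx.2)) (t, s)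
      = pri t * ft s t * G s := by
    intro t s
    simp only [pr, hp, Fintype.sum_prod_type, Prod.mk.injEq]
    rw [Finset.sum_eq_single t]
    · simp only [true_and, if_true, eq_self_iff_true, hG, Finset.mul_sum, mul_ite, mul_zero]
      refine Finset.sum_congr rfl fun x _ => ?_
      by_cases h : 𝒮 x = s
      · simp only [if_pos h]
        rw [hfact x t, h]; ring
      · simp [h]
    · intro b _ hb
      simp [hb]
    · simp
  have h2 : ∀ s, pr p (fun tx => 𝒮 tx.2) s = A s * G s := by
    intro s
    simp only [pr, hp, Fintype.sum_prod_type, hA, hG]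
    rw [Finset.sum_mul]
    refine Finset.sum_congr rfl fun t _ => ?_
    rw [Finset.mul_sum]
    refine Finset.sum_congr rfl fun x _ => ?_
    by_cases h : 𝒮 x = s
    · simp only [if_pos h, mul_ite, mul_zero]
      rw [hfact x t, h]; ring
    · simp [h]
  have h3 : ∀ t x s, pr p (fun tx => (tx.1, (tx.2, 𝒮 tx.2))) (t, (x, s))
      = if 𝒮 x = s then pri t * f x t else 0 := by
    intro t x s
    simp only [pr, hp, Fintype.sum_prod_type, Prod.mk.injEq]
    rw [Finset.sum_eq_single t]
    · rw [Finset.sum_eq_single x]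
      · simp
      · intro b _ hb; simp [hb]
      · simp
    · intro b _ hb; simp [hb]
    · simp
  have h4 : ∀ x s, pr p (fun tx => (tx.2, 𝒮 tx.2)) (x, s)
      = if 𝒮 x = s then g x * A s else 0 := by
    intro x s
    simp only [pr, hp, Fintype.sum_prod_type, Prod.mk.injEq, hA]
    by_cases h : 𝒮 x = s
    · simp only [if_pos h, Finset.mul_sum]
      refine Finset.sum_congr rfl fun t _ => ?_
      rw [Finset.sum_eq_single x]
      · rw [if_pos ⟨rfl, h⟩, hfact x t, h]; ring
      · intro b _ hb; simp [hb]
      · simp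
    · rw [if_neg h]
      apply Finset.sum_eq_zero; intro t _
      apply Finset.sum_eq_zero; intro b _
      by_cases hb : b = x
      · simp [hb, h]
      · simp [hb]
  -- the common value
  have key : ∀ t,
      (∑ s, pr p (fun tx => (tx.1, 𝒮 tx.2)) (t, s) *
        Real.log (pr p (fun tx => (tx.1, 𝒮 tx.2)) (t, s) / pr p (fun tx => 𝒮 tx.2) s))
      = ∑ y : α × β, pr p (fun tx => (tx.1, (tx.2, 𝒮 tx.2))) (t, y) *
          Real.log (pr p (fun tx => (tx.1, (tx.2, 𝒮 tx.2))) (t, y) /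
            pr p (fun tx => (tx.2, 𝒮 tx.2)) y) := by
    intro t
    have RHS : (∑ y : α × β, pr p (fun tx => (tx.1, (tx.2, 𝒮 tx.2))) (t, y) *
          Real.log (pr p (fun tx => (tx.1, (tx.2, 𝒮 tx.2))) (t, y) /
            pr p (fun tx => (tx.2, 𝒮 tx.2)) y)
        = ∑ x, pri t * f x t *
            Real.log (pri t * f x t / (g x * A (𝒮 x))) ) := by
      rw [Fintype.sum_prod_type]
      refine Finset.sum_congr rfl fun x _ => ?_
      rw [Finset.sum_eq_single (𝒮 x)]
      · simp [h3, h4]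
      · intro s _ hs
        rw [h3, h4]
        simp [Ne.symm hs]
      · simp
    have LHS : (∑ s, pr p (fun tx => (tx.1, 𝒮 tx.2)) (t, s) *
        Real.log (pr p (fun tx => (tx.1, 𝒮 tx.2)) (t, s) / pr p (fun tx => 𝒮 tx.2) s))
        = ∑ x, pri t * f x t *
            Real.log (pri t * ft (𝒮 x) t * G (𝒮 x) / (A (𝒮 x) * G (𝒮 x))) := by
      simp only [h1, h2]
      have expand : ∀ s, pri t * ft s t * G s = ∑ x, if 𝒮 x = s then pri t * f x t else 0 := by
        intro s
        simp only [hG, Finset.mul_sum, mul_ite, mul_zero]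
        refine Finset.sum_congr rfl fun x _ => ?_
        by_cases h : 𝒮 x = s
        · simp only [if_pos h]
          rw [hfact x t, h]; ring
        · simp [h]
      have step1 : (∑ s, pri t * ft s t * G s *
            Real.log (pri t * ft s t * G s / (A s * G s)))
          = ∑ s, ∑ x, (if 𝒮 x = s then pri t * f x t else 0) *
            Real.log (pri t * ft s t * G s / (A s * G s)) := by
        refine Finset.sum_congr rfl fun s _ => ?_
        rw [expand s, Finset.sum_mul]
      rw [step1, Finset.sum_comm]
      refine Finset.sum_congr rfl fun x _ => ?_
      rw [Finset.sum_eq_single (𝒮 x)]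
      · simp
      · intro s _ hs; simp [Ne.symm hs]
      · simp
    rw [LHS, RHS]
    refine Finset.sum_congr rfl fun x _ => ?_
    by_cases h0 : pri t * f x t = 0
    · rw [h0]; ring
    · have hpt : pri t ≠ 0 := fun h => h0 (by rw [h]; ring)
      have hfx : 0 < f x t := lt_of_le_of_ne (hf0 t x)
        (fun h => h0 (by rw [← h]; ring))
      have hgf : g x * ft (𝒮 x) t ≠ 0 := by rw [← hfact]; exact ne_of_gt hfx
      have hgx : g x ≠ 0 := left_ne_zero_of_mul hgf
      have hft : ft (𝒮 x) t ≠ 0 := right_ne_zero_of_mul hgf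
      have hGpos : 0 < G (𝒮 x) * ft (𝒮 x) t := by
        have hGe : G (𝒮 x) * ft (𝒮 x) t = ∑ x', if 𝒮 x' = 𝒮 x then f x' t else 0 := by
          simp only [hG, Finset.sum_mul, ite_mul, zero_mul]
          refine Finset.sum_congr rfl fun x' _ => ?_
          by_cases h : 𝒮 x' = 𝒮 x
          · simp only [if_pos h]
            rw [hfact x' t, h]
          · simp [h]
        rw [hGe]
        apply lt_of_lt_of_le hfx
        have hfe : f x t = if 𝒮 x = 𝒮 x then f x t else 0 := by simp
        rw [hfe]
        apply Finset.single_le_sum (f := fun x' => if 𝒮 x' = 𝒮 x then f x' t else 0)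
        · intro i _; by_cases h : 𝒮 i = 𝒮 x <;> simp [h, hf0 t i]
        · exact Finset.mem_univ x
      have hApos : 0 < g x * A (𝒮 x) := by
        have hAe : g x * A (𝒮 x) = ∑ t', pri t' * f x t' := by
          simp only [hA, Finset.mul_sum]
          refine Finset.sum_congr rfl fun t' _ => ?_
          rw [hfact x t']; ring
        rw [hAe]
        apply lt_of_lt_of_le (mul_pos (lt_of_le_of_ne (hpri0 t) (Ne.symm hpt)) hfx)
        apply Finset.single_le_sum (f := fun t' => pri t' * f x t')
        · intro i _; exact mul_nonneg (hpri0 i) (hf0 i x)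
        · exact Finset.mem_univ t
      have hGne : G (𝒮 x) ≠ 0 := left_ne_zero_of_mul (ne_of_gt hGpos)
      have hAne : A (𝒮 x) ≠ 0 := right_ne_zero_of_mul (ne_of_gt hApos)
      congr 2
      rw [hfact x t]
      field_simp
  -- assemble
  simp only [condMI, condH]
  rw [sub_eq_zero, neg_inj]
  exact Finset.sum_congr rfl fun t _ => key t
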